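/- arXiv:2012.00262 — 4 statements merged into one kernel-verified Lean document; each statement's English description precedes it below -/
import Mathlib

section
/- Every n-vertex tournament has at most n·(n/2)^k directed paths with k edges, i.e., the number of sequences of k+1 distinct vertices v₀, v₁, ..., v_k such that each edge v_i → v_{i+1} is directed forward is at most n·(n/2)^k. -/
open Matrix Finset BigOperators

lemma walk_sum {n : ℕ} (A : Matrix (Fin n) (Fin n) ℝ) :
    ∀ (k : ℕ) (φ : Fin n → ℝ),
      (∑ f : Fin (k+1) → Fin n, φ (f 0) * ∏ i : Fin k, A (f i.castSucc) (f i.succ))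
        = ∑ u, (φ ᵥ* (A ^ k)) u := by
  intro k
  induction k with
  | zero =>
      intro φ
      rw [Fintype.sum_equiv (Equiv.funUnique (Fin 1) (Fin n)) _ (fun u => φ u)]
      · simp
      · intro f; simp
  | succ k ih =>
      intro φ
      have key := Fintype.sum_equiv (Fin.consEquiv (fun _ : Fin (k+1+1) => Fin n))
        (fun p : Fin n × (Fin (k+1) → Fin n) =>
          (φ p.1 * A p.1 (p.2 0)) * ∏ i : Fin k, A (p.2 i.castSucc) (p.2 i.succ))
        (fun f => φ (f 0) * ∏ i : Fin (k+1), A (f i.castSucc) (f i.succ))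
        ?_
      · rw [← key, Fintype.sum_prod_type, Finset.sum_comm]
        have h2 : ∀ f : Fin (k+1) → Fin n,
            (∑ x : Fin n, (φ x * A x (f 0)) * ∏ i : Fin k, A (f i.castSucc) (f i.succ))
            = (φ ᵥ* A) (f 0) * ∏ i : Fin k, A (f i.castSucc) (f i.succ) := by
          intro f
          rw [← Finset.sum_mul]
          rfl
        simp_rw [h2]
        rw [ih (φ ᵥ* A)]
        apply Finset.sum_congr rfl
        intro u _
        rw [Matrix.vecMul_vecMul, ← pow_succ']
      · rintro ⟨x, f⟩
        simp only [Fin.consEquiv_apply]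
        rw [Fin.prod_univ_succ, Fin.cons_zero, mul_assoc]
        simp only [Fin.castSucc_zero, Fin.cons_zero, Fin.cons_succ, ← Fin.succ_castSucc]


private lemma sum_mulVec' {n : ℕ} {ι : Type} (s : Finset ι) (f : ι → Matrix (Fin n) (Fin n) ℂ)
    (v : Fin n → ℂ) : (∑ j ∈ s, f j) *ᵥ v = ∑ j ∈ s, f j *ᵥ v := by
  classical
  induction s using Finset.induction_on with
  | empty => simp [Matrix.zero_mulVec]
  | @insert a s' ha ih => rw [Finset.sum_insert ha, Finset.sum_insert ha, Matrix.add_mulVec, ih]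

private lemma dotProduct_sum' {n : ℕ} {ι : Type} (u : Fin n → ℂ) (s : Finset ι)
    (f : ι → Fin n → ℂ) : u ⬝ᵥ (∑ j ∈ s, f j) = ∑ j ∈ s, u ⬝ᵥ f j := by
  classical
  induction s using Finset.induction_on with
  | empty => simp [dotProduct]
  | @insert a s' ha ih => rw [Finset.sum_insert ha, Finset.sum_insert ha, dotProduct_add, ih]

private lemma star_dot_comm {n : ℕ} (v w : Fin n → ℂ) :
    star v ⬝ᵥ w = (starRingEnd ℂ) (star w ⬝ᵥ v) := by
  simp [dotProduct, map_sum, mul_comm]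

private lemma core {n k : ℕ} (hk : k ≠ 0) (c : ℝ) (hc : 0 < c)
    (A : Matrix (Fin n) (Fin n) ℝ)
    (hq : ∀ w : Fin n → ℂ,
      ‖star w ⬝ᵥ ((Complex.ofRealHom.mapMatrix A) *ᵥ w)‖
        ≤ c * ∑ u, Complex.normSq (w u)) :
    ∑ u, ∑ v, (A ^ k) u v ≤ n * c ^ k := by
  set Ac : Matrix (Fin n) (Fin n) ℂ := Complex.ofRealHom.mapMatrix A with hAc
  set s : ℝ := ∑ u, ∑ v, (A ^ k) u v with hs
  suffices h : ∀ z : ℝ, 0 < z → z < 1 → s * z ^ k ≤ n * c ^ k by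
    by_contra hlt
    push_neg at hlt
    have hs0 : (0:ℝ) < s := lt_of_le_of_lt (by positivity) hlt
    set t : ℝ := (n * c ^ k) / s with htdef
    have ht1 : t < 1 := (div_lt_one hs0).2 hlt
    have ht0 : 0 ≤ t := by positivity
    set z : ℝ := ((t + 1)/2) ^ ((k:ℝ))⁻¹ with hzdef
    have hhalf : 0 < (t+1)/2 := by linarith
    have hz0 : 0 < z := Real.rpow_pos_of_pos hhalf _
    have hzk : z ^ k = (t+1)/2 := by
      rw [hzdef, ← Real.rpow_natCast (((t + 1)/2) ^ ((k:ℝ))⁻¹) k, ← Real.rpow_mul (le_of_lt hhalf),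
        inv_mul_cancel₀ (by exact_mod_cast hk), Real.rpow_one]
    have hz1 : z < 1 := by
      rw [hzdef]
      apply Real.rpow_lt_one (le_of_lt hhalf) (by linarith) (by positivity)
    have hfin := h z hz0 hz1
    rw [hzk] at hfin
    have heq : n * c ^ k = s * t := by
      rw [htdef, mul_div_assoc']
      field_simp
    rw [heq] at hfin
    have : (t+1)/2 ≤ t := le_of_mul_le_mul_left (by linarith [hfin]) hs0
    linarith
  intro z hz0 hz1
  have hn : 0 ≤ (n:ℝ) := Nat.cast_nonneg n
  set d : ℝ := z / c with hd
  have hd0 : 0 < d := div_pos hz0 hc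
  have hdc : d * c = z := div_mul_cancel₀ z (ne_of_gt hc)
  set ζ : ℂ := Complex.exp (2 * Real.pi * Complex.I / k) with hζ
  have hprim : IsPrimitiveRoot ζ k := Complex.isPrimitiveRoot_exp k hk
  have hζk : ζ ^ k = 1 := hprim.pow_eq_one
  have hζabs : ‖ζ‖ = 1 := by
    have h1 : ‖ζ‖ ^ k = 1 := by
      rw [← norm_pow, hζk]; exact norm_one
    rcases lt_trichotomy ‖ζ‖ 1 with h | h | h
    · exfalso
      have := pow_lt_one₀ (norm_nonneg ζ) h hk
      rw [h1] at this; exact lt_irrefl _ this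
    · exact h
    · exfalso
      have := one_lt_pow₀ h hk
      rw [h1] at this; exact lt_irrefl _ this
  set B : Matrix (Fin n) (Fin n) ℂ := (d:ℂ) • Ac with hB
  set Y : ℕ → Matrix (Fin n) (Fin n) ℂ := fun j => (ζ ^ j) • B with hY
  set G : ℕ → Matrix (Fin n) (Fin n) ℂ := fun j => ∑ m ∈ range k, (Y j) ^ m with hG
  set M : Matrix (Fin n) (Fin n) ℂ := 1 - B ^ k with hM
  have hYpow : ∀ j m : ℕ, (Y j) ^ m = ((ζ ^ m) ^ j) • B ^ m := by
    intro j m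
    rw [hY]
    simp only
    rw [smul_pow, ← pow_mul, mul_comm j m, pow_mul]
  have hYk : ∀ j, (Y j) ^ k = B ^ k := by
    intro j
    rw [hYpow j k, hζk, one_pow, one_smul]
  -- F1
  have hF1 : ∀ j, (1 - Y j) * G j = M := by
    intro j
    have hcomm : Commute (Y j) (G j) := by
      apply Commute.sum_right
      intro m _
      exact (Commute.refl (Y j)).pow_right m
    have h2 : (1 - Y j) * G j = G j * (1 - Y j) := by
      rw [mul_one_sub, one_sub_mul, hcomm.eq]
    have h3 : G j * (1 - Y j) = 1 - (Y j) ^ k := by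
      have h1 := geom_sum_mul (Y j) k
      have h4 : G j * (1 - Y j) = -(G j * (Y j - 1)) := by rw [← mul_neg, neg_sub]
      rw [h4, h1, neg_sub]
    rw [h2, h3, hYk, hM]
  -- F2
  have hF2 : ∑ j ∈ range k, G j = (k:ℂ) • 1 := by
    have hrw : ∀ j ∈ range k, G j = ∑ m ∈ range k, ((ζ ^ m) ^ j) • B ^ m := by
      intro j _
      rw [hG]
      simp only
      exact Finset.sum_congr rfl fun m _ => hYpow j m
    rw [Finset.sum_congr rfl hrw, Finset.sum_comm]
    have hinner : ∀ m ∈ range k, (∑ j ∈ range k, ((ζ ^ m) ^ j) • B ^ m)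
        = (if m = 0 then (k:ℂ) • (1 : Matrix (Fin n) (Fin n) ℂ) else 0) := by
      intro m hm
      rw [← Finset.sum_smul]
      by_cases h0 : m = 0
      · subst h0
        simp
      · rw [if_neg h0]
        have hne : ζ ^ m ≠ 1 := by
          apply hprim.pow_ne_one_of_pos_of_lt h0
          exact Finset.mem_range.mp hm
        rw [geom_sum_eq hne, ← pow_mul, mul_comm m k, pow_mul, hζk, one_pow]
        simp
    rw [Finset.sum_congr rfl hinner, Finset.sum_ite_eq' (range k) 0]
    simp [Finset.mem_range, Nat.pos_of_ne_zero hk]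
  -- positivity of each term
  set ones : Fin n → ℂ := fun _ => 1 with hones
  have hr0 : ∀ w : Fin n → ℂ, (0:ℝ) ≤ ∑ u, Complex.normSq (w u) :=
    fun w => Finset.sum_nonneg fun u _ => Complex.normSq_nonneg _
  have hsw : ∀ w : Fin n → ℂ, star w ⬝ᵥ w = (((∑ u, Complex.normSq (w u) : ℝ)):ℂ) := by
    intro w
    push_cast
    apply Finset.sum_congr rfl
    intro u _
    rw [Pi.star_apply, RCLike.star_def, mul_comm, Complex.mul_conj]
  have hterm : ∀ (j : ℕ) (w : Fin n → ℂ),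
      star ((1 - Y j) *ᵥ w) ⬝ᵥ w
        = (((∑ u, Complex.normSq (w u) : ℝ)):ℂ)
            - (d:ℂ) * (starRingEnd ℂ) (ζ ^ j * (star w ⬝ᵥ (Ac *ᵥ w))) := by
    intro j w
    rw [Matrix.sub_mulVec, Matrix.one_mulVec, star_sub, sub_dotProduct, hsw]
    congr 1
    rw [hY]
    simp only
    rw [Matrix.smul_mulVec, hB, Matrix.smul_mulVec, star_smul, star_smul,
      smul_dotProduct, smul_dotProduct, star_dot_comm (Ac *ᵥ w) w]
    rw [_root_.map_mul (starRingEnd ℂ) (ζ ^ j) (star w ⬝ᵥ (Ac *ᵥ w))]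
    simp only [smul_eq_mul, RCLike.star_def, Complex.conj_ofReal]
    ring
  have hpos : ∀ (j : ℕ) (w : Fin n → ℂ), 0 ≤ (star ((1 - Y j) *ᵥ w) ⬝ᵥ w).re := by
    intro j w
    rw [hterm j w]
    set rw' : ℝ := ∑ u, Complex.normSq (w u)
    set Q : ℂ := ζ ^ j * (star w ⬝ᵥ (Ac *ᵥ w)) with hQ
    have h1 : ((((rw' : ℝ)):ℂ) - (d:ℂ) * (starRingEnd ℂ) Q).re = rw' - d * Q.re := by
      simp [Complex.sub_re, Complex.mul_re]
    rw [h1]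
    have h2 : Q.re ≤ ‖Q‖ := Complex.re_le_norm Q
    have h3 : ‖Q‖ = ‖star w ⬝ᵥ (Ac *ᵥ w)‖ := by
      rw [hQ, norm_mul, norm_pow, hζabs, one_pow, one_mul]
    have h4 := hq w
    rw [← h3] at h4
    have h5 : d * Q.re ≤ d * (c * rw') :=
      mul_le_mul_of_nonneg_left (le_trans h2 h4) (le_of_lt hd0)
    have h6 : d * (c * rw') = z * rw' := by rw [← mul_assoc, hdc]
    nlinarith [hr0 w]
  -- chain
  have hMj : ∀ j : ℕ, (1 - Y j) *ᵥ (G j *ᵥ ones) = M *ᵥ ones := by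
    intro j
    rw [Matrix.mulVec_mulVec, hF1 j]
  have hsum : ∑ j ∈ range k, star ((1 - Y j) *ᵥ (G j *ᵥ ones)) ⬝ᵥ (G j *ᵥ ones)
      = (k:ℂ) * (star (M *ᵥ ones) ⬝ᵥ ones) := by
    calc ∑ j ∈ range k, star ((1 - Y j) *ᵥ (G j *ᵥ ones)) ⬝ᵥ (G j *ᵥ ones)
        = ∑ j ∈ range k, star (M *ᵥ ones) ⬝ᵥ (G j *ᵥ ones) := by
          apply Finset.sum_congr rfl
          intro j _
          rw [hMj j]
      _ = star (M *ᵥ ones) ⬝ᵥ (∑ j ∈ range k, G j *ᵥ ones) :=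
          (dotProduct_sum' _ _ _).symm
      _ = star (M *ᵥ ones) ⬝ᵥ (((k:ℂ) • 1) *ᵥ ones) := by
          rw [← sum_mulVec', hF2]
      _ = (k:ℂ) * (star (M *ᵥ ones) ⬝ᵥ ones) := by
          rw [Matrix.smul_mulVec, Matrix.one_mulVec, dotProduct_smul, smul_eq_mul]
  have hchain : (0:ℝ) ≤ ((k:ℂ) * (star (M *ᵥ ones) ⬝ᵥ ones)).re := by
    rw [← hsum, Complex.re_sum]
    apply Finset.sum_nonneg
    intro j _
    exact hpos j _
  have hfinal : (0:ℝ) ≤ (star (M *ᵥ ones) ⬝ᵥ ones).re := by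
    have hkpos : (0:ℝ) < k := by exact_mod_cast Nat.pos_of_ne_zero hk
    have hre : ((k:ℂ) * (star (M *ᵥ ones) ⬝ᵥ ones)).re
        = (k:ℝ) * (star (M *ᵥ ones) ⬝ᵥ ones).re := by
      have : ((k:ℕ):ℂ) = (((k:ℕ):ℝ):ℂ) := by push_cast; ring
      rw [this]
      simp [Complex.mul_re]
    rw [hre] at hchain
    nlinarith
  -- final computation
  have hones_dot : star ones ⬝ᵥ ones = ((n:ℝ):ℂ) := by
    simp [hones, dotProduct]
  have hAck : Ac ^ k = Complex.ofRealHom.mapMatrix (A ^ k) := (map_pow _ A k).symm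
  have hsval : star ones ⬝ᵥ (Ac ^ k *ᵥ ones) = ((s:ℝ):ℂ) := by
    rw [hAck]
    simp only [hones, dotProduct, Matrix.mulVec, Pi.star_apply, star_one, one_mul, mul_one,
      RingHom.mapMatrix_apply, Matrix.map_apply, Complex.ofRealHom_eq_coe]
    rw [hs]
    push_cast
    rfl
  have hcomp : star (M *ᵥ ones) ⬝ᵥ ones = ((n:ℝ):ℂ) - ((d ^ k : ℝ):ℂ) * ((s:ℝ):ℂ) := by
    rw [hM, Matrix.sub_mulVec, Matrix.one_mulVec, star_sub, sub_dotProduct, hones_dot]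
    congr 1
    rw [hB, smul_pow, Matrix.smul_mulVec, star_smul, smul_dotProduct]
    rw [star_dot_comm (Ac ^ k *ᵥ ones) ones, hsval]
    simp only [RCLike.star_def, map_pow, Complex.conj_ofReal, smul_eq_mul]
    push_cast
    ring
  rw [hcomp] at hfinal
  have hre2 : (((n:ℝ):ℂ) - ((d ^ k : ℝ):ℂ) * ((s:ℝ):ℂ)).re = (n:ℝ) - d ^ k * s := by
    rw [show ((d ^ k : ℝ):ℂ) * ((s:ℝ):ℂ) = (((d ^ k * s : ℝ)):ℂ) by push_cast; ring,
      ← Complex.ofReal_sub, Complex.ofReal_re]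
  rw [hre2] at hfinal
  -- conclude : s * z^k ≤ n * c^k
  have hck : (0:ℝ) < c ^ k := pow_pos hc k
  have hdk : d ^ k = z ^ k / c ^ k := by rw [hd, div_pow]
  rw [hdk] at hfinal
  have := mul_le_mul_of_nonneg_right (by linarith : z ^ k / c ^ k * s ≤ (n:ℝ)) (le_of_lt hck)
  calc s * z ^ k = z ^ k / c ^ k * s * c ^ k := by field_simp
    _ ≤ (n:ℝ) * c ^ k := this


private lemma numrad {n : ℕ} (A : Matrix (Fin n) (Fin n) ℝ)
    (hdiag : ∀ u, A u u = 0) (hpair : ∀ u v : Fin n, u ≠ v → A u v + A v u = 1)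
    (hnn : ∀ u v, 0 ≤ A u v) :
    ∀ w : Fin n → ℂ, ‖star w ⬝ᵥ (Complex.ofRealHom.mapMatrix A *ᵥ w)‖
      ≤ ((n:ℝ)/2) * ∑ u, Complex.normSq (w u) := by
  intro w
  set x : Fin n → ℝ := fun u => ‖w u‖ with hx
  have hx0 : ∀ u, 0 ≤ x u := fun u => norm_nonneg _
  have hstep1 : ‖star w ⬝ᵥ (Complex.ofRealHom.mapMatrix A *ᵥ w)‖
      ≤ ∑ u, ∑ v, A u v * (x u * x v) := by
    have hrw : star w ⬝ᵥ (Complex.ofRealHom.mapMatrix A *ᵥ w)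
        = ∑ u, ∑ v, (starRingEnd ℂ) (w u) * (((A u v : ℝ):ℂ) * w v) := by
      simp [dotProduct, Matrix.mulVec, Finset.mul_sum, RCLike.star_def]
    rw [hrw]
    refine le_trans (norm_sum_le _ _) ?_
    apply Finset.sum_le_sum
    intro u _
    refine le_trans (norm_sum_le _ _) ?_
    apply Finset.sum_le_sum
    intro v _
    rw [norm_mul, norm_mul, Complex.norm_conj,
      Complex.norm_real, Real.norm_eq_abs, abs_of_nonneg (hnn u v)]
    rw [hx]
    ring_nf
    exact le_refl _
  have hsum_sq : (∑ u, x u)^2 ≤ (n:ℝ) * ∑ u, x u ^ 2 := by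
    have := sq_sum_le_card_mul_sum_sq (s := Finset.univ) (f := x)
    simpa using this
  have hdouble : 2 * (∑ u, ∑ v, A u v * (x u * x v)) = (∑ u, x u)^2 - ∑ u, x u ^ 2 := by
    have hsymm : ∑ u, ∑ v, A u v * (x u * x v) = ∑ u, ∑ v, A v u * (x u * x v) := by
      rw [Finset.sum_comm]
      apply Finset.sum_congr rfl; intro u _
      apply Finset.sum_congr rfl; intro v _
      ring
    have h2 : 2 * (∑ u, ∑ v, A u v * (x u * x v))
        = ∑ u, ∑ v, (A u v + A v u) * (x u * x v) := by
      rw [two_mul]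
      nth_rewrite 2 [hsymm]
      rw [← Finset.sum_add_distrib]
      apply Finset.sum_congr rfl; intro u _
      rw [← Finset.sum_add_distrib]
      apply Finset.sum_congr rfl; intro v _
      ring
    rw [h2]
    have h3 : ∀ u v : Fin n, (A u v + A v u) * (x u * x v)
        = x u * x v - (if v = u then x u * x v else 0) := by
      intro u v
      by_cases h : v = u
      · subst h
        rw [if_pos rfl, hdiag v]
        ring
      · rw [if_neg h, hpair u v (Ne.symm h)]
        ring
    simp_rw [h3]
    have h4 : ∀ u : Fin n, ∑ v, (x u * x v - (if v = u then x u * x v else 0))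
        = (∑ v, x u * x v) - x u ^ 2 := by
      intro u
      rw [Finset.sum_sub_distrib, Finset.sum_ite_eq' Finset.univ u (fun v => x u * x v)]
      simp [sq]
    simp_rw [h4]
    rw [Finset.sum_sub_distrib]
    congr 1
    rw [sq, Finset.sum_mul_sum]
  have hnormsq : ∑ u, Complex.normSq (w u) = ∑ u, x u ^ 2 := by
    apply Finset.sum_congr rfl
    intro u _
    rw [hx, ← Complex.sq_norm]
  rw [hnormsq]
  have hxx : (0:ℝ) ≤ ∑ u, x u ^ 2 := Finset.sum_nonneg fun u _ => sq_nonneg _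
  nlinarith [hstep1, hdouble, hsum_sq]


theorem tournament_path_count (n k : ℕ) (r : Fin n → Fin n → Prop)
    (hirr : ∀ u, ¬ r u u)
    (htour : ∀ u v : Fin n, u ≠ v → (r u v ↔ ¬ r v u)) :
    (Nat.card {v : Fin (k+1) → Fin n // Function.Injective v ∧
      ∀ i : Fin k, r (v i.castSucc) (v i.succ)} : ℝ) ≤ n * (n / 2 : ℝ) ^ k := by
  classical
  set A : Matrix (Fin n) (Fin n) ℝ := Matrix.of (fun u v => if r u v then 1 else 0) with hA
  have hdiag : ∀ u, A u u = 0 := by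
    intro u; simp [hA, hirr u]
  have hpair : ∀ u v : Fin n, u ≠ v → A u v + A v u = 1 := by
    intro u v huv
    simp only [hA, Matrix.of_apply]
    by_cases h : r u v
    · rw [if_pos h, if_neg ((htour u v huv).mp h)]; norm_num
    · rw [if_neg h, if_pos ((htour v u (Ne.symm huv)).mpr h)]; norm_num
  have hnn : ∀ u v, 0 ≤ A u v := by
    intro u v
    simp only [hA, Matrix.of_apply]
    split <;> norm_num
  have h1 : Nat.card {v : Fin (k+1) → Fin n // Function.Injective v ∧
      ∀ i : Fin k, r (v i.castSucc) (v i.succ)}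
      ≤ Nat.card {v : Fin (k+1) → Fin n // ∀ i : Fin k, r (v i.castSucc) (v i.succ)} := by
    apply Nat.card_le_card_of_injective
      (fun p : {v : Fin (k+1) → Fin n // Function.Injective v ∧
          ∀ i : Fin k, r (v i.castSucc) (v i.succ)} =>
        (⟨p.1, p.2.2⟩ : {v : Fin (k+1) → Fin n // ∀ i : Fin k, r (v i.castSucc) (v i.succ)}))
    intro a b hab
    have hab' : (⟨a.1, a.2.2⟩ : {v : Fin (k+1) → Fin n // ∀ i : Fin k,
        r (v i.castSucc) (v i.succ)}) = ⟨b.1, b.2.2⟩ := hab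
    exact Subtype.ext (Subtype.mk_eq_mk.mp hab')
  have h2 : (Nat.card {v : Fin (k+1) → Fin n // ∀ i : Fin k, r (v i.castSucc) (v i.succ)} : ℝ)
      = ∑ f : Fin (k+1) → Fin n, ∏ i : Fin k, A (f i.castSucc) (f i.succ) := by
    rw [Nat.card_eq_fintype_card, Fintype.card_subtype, Finset.card_filter]
    push_cast
    apply Finset.sum_congr rfl
    intro f _
    simp only [hA, Matrix.of_apply]
    rw [Finset.prod_boole]
    simp
  have h3 : ∑ f : Fin (k+1) → Fin n, ∏ i : Fin k, A (f i.castSucc) (f i.succ)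
      = ∑ u, ∑ v, (A ^ k) u v := by
    have hws := walk_sum A k (fun _ => 1)
    simp only [one_mul] at hws
    rw [hws]
    have hvm : ∀ v, ((fun _ => (1:ℝ)) ᵥ* (A ^ k)) v = ∑ u, (A ^ k) u v := by
      intro v; simp [Matrix.vecMul, dotProduct]
    simp_rw [hvm]
    rw [Finset.sum_comm]
  rcases Nat.eq_zero_or_pos n with hn0 | hnpos
  · subst hn0
    have hempty : IsEmpty {v : Fin (k+1) → Fin 0 // Function.Injective v ∧
        ∀ i : Fin k, r (v i.castSucc) (v i.succ)} := by
      constructor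
      rintro ⟨f, -⟩
      exact (f 0).elim0
    rw [Nat.card_of_isEmpty]
    norm_num
  rcases Nat.eq_zero_or_pos k with hk0 | hkpos
  · subst hk0
    have hle : Nat.card {v : Fin (0+1) → Fin n // Function.Injective v ∧
        ∀ i : Fin 0, r (v i.castSucc) (v i.succ)} ≤ Nat.card (Fin (0+1) → Fin n) :=
      Nat.card_le_card_of_injective Subtype.val Subtype.val_injective
    have hcard : Nat.card (Fin (0+1) → Fin n) = n := by
      simp [Nat.card_eq_fintype_card]
    rw [hcard] at hle
    rw [pow_zero, mul_one]
    exact_mod_cast hle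
  -- main case
  have hcore := core (Nat.pos_iff_ne_zero.mp hkpos) ((n:ℝ)/2)
    (by positivity) A (numrad A hdiag hpair hnn)
  have hfin : (Nat.card {v : Fin (k+1) → Fin n // Function.Injective v ∧
      ∀ i : Fin k, r (v i.castSucc) (v i.succ)} : ℝ)
      ≤ ∑ u, ∑ v, (A ^ k) u v := by
    rw [← h3, ← h2]
    exact_mod_cast h1
  calc (Nat.card {v : Fin (k+1) → Fin n // Function.Injective v ∧
      ∀ i : Fin k, r (v i.castSucc) (v i.succ)} : ℝ)
      ≤ ∑ u, ∑ v, (A ^ k) u v := hfin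
    _ ≤ n * ((n:ℝ)/2) ^ k := hcore
end

section
/- Let f : [0,1]² → [0,1] be integrable with f(x,y) + f(y,x) ≤ 1 for all x,y. Define g₀ ≡ 1 and g_t(y) = ∫₀¹ g_{t-1}(x) f(x,y) dx for t ≥ 1. Then for every t ≥ 1, ∫∫ g_t(y)² f(y,z) dy dz ≤ (1/4) ∫∫ g_{t-1}(x)² f(x,y) dx dy. -/
open MeasureTheory

theorem contraction_step (f : ℝ → ℝ → ℝ)
    (hint : IntegrableOn (fun p : ℝ × ℝ => f p.1 p.2)
      (Set.Icc (0:ℝ) 1 ×ˢ Set.Icc (0:ℝ) 1))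
    (hrange : ∀ x ∈ Set.Icc (0:ℝ) 1, ∀ y ∈ Set.Icc (0:ℝ) 1, f x y ∈ Set.Icc (0:ℝ) 1)
    (hanti : ∀ x ∈ Set.Icc (0:ℝ) 1, ∀ y ∈ Set.Icc (0:ℝ) 1, f x y + f y x ≤ 1)
    (g : ℕ → ℝ → ℝ) (hg0 : ∀ y, g 0 y = 1)
    (hgs : ∀ t y, g (t+1) y = ∫ x in Set.Icc (0:ℝ) 1, g t x * f x y)
    (t : ℕ) (ht : 1 ≤ t) :
    (∫ y in Set.Icc (0:ℝ) 1, ∫ z in Set.Icc (0:ℝ) 1, (g t y)^2 * f y z) ≤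
      (1/4) * ∫ x in Set.Icc (0:ℝ) 1, ∫ y in Set.Icc (0:ℝ) 1, (g (t-1) x)^2 * f x y := by
  obtain ⟨s, rfl⟩ : ∃ s, t = s + 1 := ⟨t - 1, (Nat.succ_pred_eq_of_pos ht).symm⟩
  simp only [Nat.add_sub_cancel]
  set I : Set ℝ := Set.Icc (0:ℝ) 1 with hI
  set μ : Measure ℝ := volume.restrict I with hμ
  have hImeas : MeasurableSet I := measurableSet_Icc
  have hprob : IsProbabilityMeasure μ := ⟨by simp [hμ, hI, Real.volume_Icc]⟩
  have hprod : μ.prod μ = volume.restrict (I ×ˢ I) := by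
    rw [hμ, Measure.prod_restrict, ← Measure.volume_eq_prod]
  have hFint : Integrable (fun p : ℝ × ℝ => f p.1 p.2) (μ.prod μ) := by
    rw [hprod]; exact hint
  have hFmeas := hFint.aestronglyMeasurable
  have haeI : ∀ᵐ y ∂μ, y ∈ I := ae_restrict_mem hImeas
  have haeII : ∀ᵐ p ∂(μ.prod μ), p ∈ I ×ˢ I := by
    rw [hprod]; exact ae_restrict_mem (hImeas.prod hImeas)
  -- bounds on g
  have hgb : ∀ n, ∀ y ∈ I, 0 ≤ g n y ∧ g n y ≤ 1 := by
    intro n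
    induction n with
    | zero => intro y _; simp [hg0]
    | succ n ih =>
      intro y hy
      rw [hgs]
      have hb : ∀ᵐ x ∂μ, ‖g n x * f x y‖ ≤ 1 := by
        filter_upwards [haeI] with x hx
        have h1 := ih x hx
        have h2 := hrange x hx y hy
        rw [Real.norm_eq_abs, abs_of_nonneg (mul_nonneg h1.1 h2.1)]
        exact mul_le_one₀ h1.2 h2.1 h2.2
      constructor
      · exact setIntegral_nonneg hImeas fun x hx =>
          mul_nonneg (ih x hx).1 (hrange x hx y hy).1
      · have := norm_integral_le_of_norm_le_const (μ := μ) hb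
        rw [probReal_univ] at this
        simpa using (le_abs_self _).trans this
  -- measurability of g
  have hgm : ∀ n, AEStronglyMeasurable (g n) μ := by
    intro n
    induction n with
    | zero =>
      have : g 0 = fun _ => (1:ℝ) := funext hg0
      rw [this]; exact aestronglyMeasurable_const
    | succ n ih =>
      have hH : AEStronglyMeasurable (fun p : ℝ × ℝ => g n p.2 * f p.2 p.1) (μ.prod μ) := by
        refine AEStronglyMeasurable.mul ?_ ?_
        · exact ih.comp_quasiMeasurePreserving Measure.quasiMeasurePreserving_snd
        · exact hFmeas.comp_quasiMeasurePreserving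
            Measure.measurePreserving_swap.quasiMeasurePreserving
      have h2 := hH.integral_prod_right'
      have : g (n+1) = fun y => ∫ x, g n x * f x y ∂μ := funext fun y => hgs n y
      rw [this]; exact h2
  -- integrability of (g s x)^2 * f x y on the product
  have hG2meas : AEStronglyMeasurable (fun p : ℝ × ℝ => (g s p.1)^2 * f p.1 p.2) (μ.prod μ) := by
    have h1 : AEStronglyMeasurable (fun p : ℝ × ℝ => g s p.1) (μ.prod μ) :=
      (hgm s).comp_quasiMeasurePreserving Measure.quasiMeasurePreserving_fst
    have : AEStronglyMeasurable (fun p : ℝ × ℝ => (g s p.1)^2) (μ.prod μ) := by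
      exact h1.pow 2
    exact this.mul hFmeas
  have hG2int : Integrable (fun p : ℝ × ℝ => (g s p.1)^2 * f p.1 p.2) (μ.prod μ) := by
    refine hFint.mono hG2meas ?_
    filter_upwards [haeII] with p hp
    have h1 := hgb s p.1 hp.1
    rw [Real.norm_eq_abs, Real.norm_eq_abs, abs_mul]
    have : |(g s p.1)^2| ≤ 1 := by
      rw [abs_of_nonneg (sq_nonneg _)]
      nlinarith [h1.1, h1.2]
    exact mul_le_of_le_one_left (abs_nonneg _) this |>.trans_eq rfl
  -- the key pointwise (a.e.) inequality
  have hkey : ∀ᵐ y ∂μ, (g (s+1) y)^2 * (∫ z, f y z ∂μ) ≤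
      (1/4) * ∫ x, (g s x)^2 * f x y ∂μ := by
    filter_upwards [haeI, hFint.prod_left_ae, hFint.prod_right_ae] with y hy Ix Iz
    set A := ∫ x, (g s x)^2 * f x y ∂μ with hA
    set B := ∫ x, f x y ∂μ with hB
    set C := ∫ z, f y z ∂μ with hC
    have hB0 : 0 ≤ B := integral_nonneg_of_ae <| by
      filter_upwards [haeI] with x hx; exact (hrange x hx y hy).1
    have hC0 : 0 ≤ C := integral_nonneg_of_ae <| by
      filter_upwards [haeI] with x hx; exact (hrange y hy x hx).1
    have hA0 : 0 ≤ A := integral_nonneg_of_ae <| by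
      filter_upwards [haeI] with x hx
      exact mul_nonneg (sq_nonneg _) (hrange x hx y hy).1
    have hBC : B + C ≤ 1 := by
      have h1 : B + C = ∫ x, (f x y + f y x) ∂μ := (integral_add Ix Iz).symm
      have h2 : (∫ x, (f x y + f y x) ∂μ) ≤ ∫ _, (1:ℝ) ∂μ := by
        refine integral_mono_ae (Ix.add Iz) (integrable_const 1) ?_
        filter_upwards [haeI] with x hx; exact hanti x hx y hy
      rw [h1]; simpa using h2
    -- Cauchy–Schwarz
    have hpq : (2:ℝ).HolderConjugate 2 := Real.HolderConjugate.two_two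
    set u := fun x => g s x * Real.sqrt (f x y) with hu
    set v := fun x => Real.sqrt (f x y) with hv
    have hfm : AEStronglyMeasurable (fun x => f x y) μ := Ix.aestronglyMeasurable
    have hvm : AEStronglyMeasurable v μ :=
      Real.continuous_sqrt.comp_aestronglyMeasurable hfm
    have hum : AEStronglyMeasurable u μ := (hgm s).mul hvm
    have hvb : ∀ᵐ x ∂μ, ‖v x‖ ≤ 1 := by
      filter_upwards [haeI] with x hx
      have h2 := hrange x hx y hy
      rw [Real.norm_eq_abs, abs_of_nonneg (Real.sqrt_nonneg _)]
      exact Real.sqrt_le_one.mpr h2.2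
    have hub : ∀ᵐ x ∂μ, ‖u x‖ ≤ 1 := by
      filter_upwards [haeI] with x hx
      have h1 := hgb s x hx
      have h2 := hrange x hx y hy
      rw [Real.norm_eq_abs, abs_of_nonneg (mul_nonneg h1.1 (Real.sqrt_nonneg _))]
      exact mul_le_one₀ h1.2 (Real.sqrt_nonneg _) (Real.sqrt_le_one.mpr h2.2)
    have hu0 : 0 ≤ᵐ[μ] u := by
      filter_upwards [haeI] with x hx
      exact mul_nonneg (hgb s x hx).1 (Real.sqrt_nonneg _)
    have hv0 : 0 ≤ᵐ[μ] v := Filter.Eventually.of_forall fun x => Real.sqrt_nonneg _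
    have hu2 : MemLp u (ENNReal.ofReal 2) μ := MemLp.of_bound hum 1 hub
    have hv2 : MemLp v (ENNReal.ofReal 2) μ := MemLp.of_bound hvm 1 hvb
    have hH := integral_mul_le_Lp_mul_Lq_of_nonneg hpq hu0 hv0 hu2 hv2
    have h1 : ∫ x, u x * v x ∂μ = ∫ x, g s x * f x y ∂μ := by
      refine integral_congr_ae ?_
      filter_upwards [haeI] with x hx
      have h2 := hrange x hx y hy
      simp only [hu, hv]
      rw [mul_assoc, Real.mul_self_sqrt h2.1]
    have hrpow2 : ∀ a : ℝ, a ^ (2:ℝ) = a ^ 2 := fun a => by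
      rw [show (2:ℝ) = ((2:ℕ):ℝ) by norm_num, Real.rpow_natCast]
    have h2 : ∫ x, u x ^ (2:ℝ) ∂μ = A := by
      refine integral_congr_ae ?_
      filter_upwards [haeI] with x hx
      have hf2 := hrange x hx y hy
      simp only [hu, hrpow2]
      rw [mul_pow, Real.sq_sqrt hf2.1]
    have h3 : ∫ x, v x ^ (2:ℝ) ∂μ = B := by
      refine integral_congr_ae ?_
      filter_upwards [haeI] with x hx
      have hf2 := hrange x hx y hy
      simp only [hv, hrpow2]
      rw [Real.sq_sqrt hf2.1]
    rw [h1, h2, h3] at hH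
    have hgy : g (s+1) y = ∫ x, g s x * f x y ∂μ := hgs s y
    have hgy0 : 0 ≤ g (s+1) y := (hgb (s+1) y hy).1
    have hsq : (g (s+1) y)^2 ≤ A * B := by
      have hle : g (s+1) y ≤ A ^ (1/2:ℝ) * B ^ (1/2:ℝ) := by rw [hgy]; exact hH
      calc (g (s+1) y)^2 ≤ (A ^ (1/2:ℝ) * B ^ (1/2:ℝ))^2 := by
            have hr0 : (0:ℝ) ≤ A ^ (1/2:ℝ) * B ^ (1/2:ℝ) :=
              mul_nonneg (Real.rpow_nonneg hA0 _) (Real.rpow_nonneg hB0 _)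
            nlinarith [hle, hgy0, hr0]
        _ = A * B := by
            rw [mul_pow, ← hrpow2 (A ^ (1/2:ℝ)), ← hrpow2 (B ^ (1/2:ℝ)),
              ← Real.rpow_mul hA0, ← Real.rpow_mul hB0]
            norm_num
    have hBC4 : B * C ≤ 1/4 := by nlinarith [sq_nonneg (B - C)]
    have step1 : (g (s+1) y)^2 * C ≤ A * B * C := mul_le_mul_of_nonneg_right hsq hC0
    have step2 : A * B * C ≤ A * (1/4) := by
      rw [mul_assoc]
      exact mul_le_mul_of_nonneg_left hBC4 hA0
    linarith
  -- rewrite LHS as a single integral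
  have hC_meas : AEStronglyMeasurable (fun y => ∫ z, f y z ∂μ) μ :=
    hFmeas.integral_prod_right'
  have hlhs_int : Integrable (fun y => (g (s+1) y)^2 * ∫ z, f y z ∂μ) μ := by
    refine Integrable.mono' (integrable_const (1:ℝ)) ?_ ?_
    · have hg2 : AEStronglyMeasurable (fun y => (g (s+1) y)^2) μ := by
        exact (hgm (s+1)).pow 2
      exact hg2.mul hC_meas
    · filter_upwards [haeI] with y hy
      have h1 := hgb (s+1) y hy
      have hC1 : ‖∫ z, f y z ∂μ‖ ≤ 1 := by
        have hb : ∀ᵐ z ∂μ, ‖f y z‖ ≤ 1 := by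
          filter_upwards [haeI] with z hz
          have := hrange y hy z hz
          rw [Real.norm_eq_abs, abs_of_nonneg this.1]; exact this.2
        have := norm_integral_le_of_norm_le_const (μ := μ) hb
        rwa [probReal_univ, mul_one] at this
      rw [Real.norm_eq_abs, abs_mul, abs_of_nonneg (sq_nonneg _)]
      have hg1 : (g (s+1) y)^2 ≤ 1 := by nlinarith [h1.1, h1.2]
      calc (g (s+1) y)^2 * |∫ z, f y z ∂μ| ≤ 1 * 1 :=
        mul_le_mul hg1 hC1 (abs_nonneg _) one_pos.le
      _ = 1 := one_mul 1
  have hrhs_int : Integrable (fun y => (1/4 : ℝ) * ∫ x, (g s x)^2 * f x y ∂μ) μ :=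
    (hG2int.integral_prod_right).const_mul _
  have hstep : (∫ y, ∫ z, (g (s+1) y)^2 * f y z ∂μ ∂μ) =
      ∫ y, (g (s+1) y)^2 * ∫ z, f y z ∂μ ∂μ := by
    refine integral_congr_ae (Filter.Eventually.of_forall fun y => ?_)
    exact integral_const_mul _ _
  calc (∫ y, ∫ z, (g (s+1) y)^2 * f y z ∂μ ∂μ)
      = ∫ y, (g (s+1) y)^2 * ∫ z, f y z ∂μ ∂μ := hstep
    _ ≤ ∫ y, (1/4 : ℝ) * ∫ x, (g s x)^2 * f x y ∂μ ∂μ :=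
        integral_mono_ae hlhs_int hrhs_int hkey
    _ = (1/4 : ℝ) * ∫ y, ∫ x, (g s x)^2 * f x y ∂μ ∂μ := integral_const_mul _ _
    _ = (1/4 : ℝ) * ∫ x, ∫ y, (g s x)^2 * f x y ∂μ ∂μ := by
        have hG2int' : Integrable (Function.uncurry fun x y => (g s x)^2 * f x y) (μ.prod μ) :=
          hG2int
        exact congrArg (fun r => (1/4 : ℝ) * r) (integral_integral_swap hG2int').symm
end

section
/- Let f : [0,1]² → [0,1] be integrable with f(x,y) + f(y,x) ≤ 1 for all x,y. Define g₀ ≡ 1 and g_t(y) = ∫₀¹ g_{t-1}(x) f(x,y) dx. Then for every k ≥ 1, ∫∫ g_{k-1}(y)² f(y,z) dy dz ≤ 2^{-(2k-1)}. -/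
open MeasureTheory

theorem iterated_contraction (f : ℝ → ℝ → ℝ)
    (hint : IntegrableOn (fun p : ℝ × ℝ => f p.1 p.2)
      (Set.Icc (0:ℝ) 1 ×ˢ Set.Icc (0:ℝ) 1))
    (hrange : ∀ x ∈ Set.Icc (0:ℝ) 1, ∀ y ∈ Set.Icc (0:ℝ) 1, f x y ∈ Set.Icc (0:ℝ) 1)
    (hanti : ∀ x ∈ Set.Icc (0:ℝ) 1, ∀ y ∈ Set.Icc (0:ℝ) 1, f x y + f y x ≤ 1)
    (g : ℕ → ℝ → ℝ) (hg0 : ∀ y, g 0 y = 1)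
    (hgs : ∀ t y, g (t+1) y = ∫ x in Set.Icc (0:ℝ) 1, g t x * f x y)
    (k : ℕ) (hk : 1 ≤ k) :
    (∫ y in Set.Icc (0:ℝ) 1, ∫ z in Set.Icc (0:ℝ) 1, (g (k-1) y)^2 * f y z) ≤
      (1/2 : ℝ) ^ (2*k - 1) := by
  have hI : MeasurableSet (Set.Icc (0:ℝ) 1) := measurableSet_Icc
  set μ : Measure ℝ := volume.restrict (Set.Icc (0:ℝ) 1) with hμdef
  have hμuniv : μ Set.univ = 1 := by
    simp [hμdef, Measure.restrict_apply_univ, Real.volume_Icc]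
  haveI : IsFiniteMeasure μ := ⟨by rw [hμuniv]; exact ENNReal.one_lt_top⟩
  have hμunivToReal : (μ Set.univ).toReal = 1 := by rw [hμuniv]; simp
  have hvolI : (volume (Set.Icc (0:ℝ) 1)) < ⊤ := by simp [Real.volume_Icc]
  have hF : Integrable (fun p : ℝ × ℝ => f p.1 p.2) (μ.prod μ) := by
    rw [hμdef, Measure.prod_restrict, ← Measure.volume_eq_prod]
    exact hint
  have hmem2 : ∀ᵐ p : ℝ × ℝ ∂(μ.prod μ),
      p.1 ∈ Set.Icc (0:ℝ) 1 ∧ p.2 ∈ Set.Icc (0:ℝ) 1 := by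
    rw [hμdef, Measure.prod_restrict]
    filter_upwards [ae_restrict_mem ((hI.prod hI))] with p hp
    exact hp
  have hmem1 : ∀ᵐ y ∂μ, y ∈ Set.Icc (0:ℝ) 1 := ae_restrict_mem hI
  -- bounds on g
  have hgb : ∀ t, ∀ y ∈ Set.Icc (0:ℝ) 1, 0 ≤ g t y ∧ g t y ≤ 1 := by
    intro t
    induction t with
    | zero => intro y _; rw [hg0]; norm_num
    | succ t ih =>
      intro y hy
      rw [hgs]
      refine ⟨setIntegral_nonneg hI fun x hx => mul_nonneg (ih x hx).1 (hrange x hx y hy).1, ?_⟩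
      have hb : ‖∫ x in Set.Icc (0:ℝ) 1, g t x * f x y‖
          ≤ 1 * (volume (Set.Icc (0:ℝ) 1)).toReal := by
        apply norm_setIntegral_le_of_norm_le_const_ae' hvolI
        filter_upwards with x hx
        have h1 := ih x hx
        have h2 := hrange x hx y hy
        rw [Real.norm_eq_abs, abs_of_nonneg (mul_nonneg h1.1 h2.1)]
        nlinarith [h1.1, h1.2, h2.1, h2.2]
      rw [Real.volume_Icc] at hb
      simp only [sub_zero, ENNReal.toReal_ofReal zero_le_one, mul_one] at hb
      exact le_trans (le_abs_self _) hb
  -- measurability of g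
  have hgm : ∀ t, AEStronglyMeasurable (g t) μ := by
    intro t
    induction t with
    | zero =>
      exact aestronglyMeasurable_const.congr
        (Filter.Eventually.of_forall fun y => (hg0 y).symm)
    | succ t ih =>
      have h1 : AEStronglyMeasurable (fun p : ℝ × ℝ => g t p.1 * f p.1 p.2) (μ.prod μ) :=
        ih.comp_fst.mul hF.aestronglyMeasurable
      have h2 := h1.prod_swap.integral_prod_right'
      exact h2.congr (Filter.Eventually.of_forall fun y => (hgs t y).symm)
  -- row sums
  set w : ℝ → ℝ := fun y => ∫ z, f y z ∂μ with hwdef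
  have hwm : AEStronglyMeasurable w μ := hF.aestronglyMeasurable.integral_prod_right'
  have hw01 : ∀ y ∈ Set.Icc (0:ℝ) 1, 0 ≤ w y ∧ w y ≤ 1 := by
    intro y hy
    refine ⟨setIntegral_nonneg hI fun z hz => (hrange y hy z hz).1, ?_⟩
    have hb : ‖∫ z in Set.Icc (0:ℝ) 1, f y z‖
        ≤ 1 * (volume (Set.Icc (0:ℝ) 1)).toReal := by
      apply norm_setIntegral_le_of_norm_le_const_ae' hvolI
      filter_upwards with z hz
      rw [Real.norm_eq_abs, abs_of_nonneg (hrange y hy z hz).1]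
      exact (hrange y hy z hz).2
    rw [Real.volume_Icc] at hb
    simp only [sub_zero, ENNReal.toReal_ofReal zero_le_one, mul_one] at hb
    exact le_trans (le_abs_self _) hb
  -- boundedness ⇒ integrability helpers
  have hbd1 : ∀ (G : ℝ → ℝ), AEStronglyMeasurable G μ →
      (∀ y ∈ Set.Icc (0:ℝ) 1, |G y| ≤ 1) → Integrable G μ := by
    intro G hm hb
    refine (integrable_const (1:ℝ)).mono' hm ?_
    filter_upwards [hmem1] with y hy
    simpa [Real.norm_eq_abs] using hb y hy
  have hbd2 : ∀ (G : ℝ × ℝ → ℝ), AEStronglyMeasurable G (μ.prod μ) →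
      (∀ p : ℝ × ℝ, p.1 ∈ Set.Icc (0:ℝ) 1 → p.2 ∈ Set.Icc (0:ℝ) 1 → |G p| ≤ 1) →
      Integrable G (μ.prod μ) := by
    intro G hm hb
    refine (integrable_const (1:ℝ)).mono' hm ?_
    filter_upwards [hmem2] with p hp
    simpa [Real.norm_eq_abs] using hb p hp.1 hp.2
  -- inner integral identity
  have hinner : ∀ t, (∫ y, ∫ z, (g t y)^2 * f y z ∂μ ∂μ) = ∫ y, (g t y)^2 * w y ∂μ := by
    intro t
    refine integral_congr_ae (Filter.Eventually.of_forall fun y => ?_)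
    exact integral_const_mul ((g t y)^2) (fun z => f y z)
  -- main induction
  have main : ∀ t, (∫ y, ∫ z, (g t y)^2 * f y z ∂μ ∂μ) ≤ (1/2:ℝ)^(2*t+1) := by
    intro t
    induction t with
    | zero =>
      simp only [hg0, one_pow, one_mul]
      have hFswap : Integrable (fun p : ℝ × ℝ => f p.2 p.1) (μ.prod μ) := hF.swap
      have hswap : (∫ p : ℝ × ℝ, f p.2 p.1 ∂(μ.prod μ))
          = ∫ p : ℝ × ℝ, f p.1 p.2 ∂(μ.prod μ) :=
        integral_prod_swap (fun p : ℝ × ℝ => f p.1 p.2)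
      have hdouble : (∫ y, ∫ z, f y z ∂μ ∂μ)
          = ∫ p : ℝ × ℝ, f p.1 p.2 ∂(μ.prod μ) := integral_integral hF
      have hprodu : (μ.prod μ) Set.univ = 1 := by
        rw [← Set.univ_prod_univ, Measure.prod_prod, hμuniv, mul_one]
      have hadd : (∫ p : ℝ × ℝ, (f p.1 p.2 + f p.2 p.1) ∂(μ.prod μ))
          ≤ ∫ _p : ℝ × ℝ, (1:ℝ) ∂(μ.prod μ) := by
        apply integral_mono_ae (hF.add hFswap) (integrable_const 1)
        filter_upwards [hmem2] with p hp using hanti p.1 hp.1 p.2 hp.2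
      rw [integral_add hF hFswap, hswap, integral_const, Measure.real, hprodu] at hadd
      simp only [ENNReal.toReal_one, smul_eq_mul, one_mul, mul_one] at hadd
      rw [hdouble]
      norm_num
      linarith
    | succ t ih =>
      set A : ℝ → ℝ := fun y => ∫ x, (g t x)^2 * f x y ∂μ with hAdef
      have hGm : AEStronglyMeasurable (fun x => (g t x)^2) μ :=
        (continuous_pow 2).comp_aestronglyMeasurable (hgm t)
      have hGF : AEStronglyMeasurable (fun p : ℝ × ℝ => (g t p.1)^2 * f p.1 p.2) (μ.prod μ) :=
        hGm.comp_fst.mul hF.aestronglyMeasurable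
      have hAm : AEStronglyMeasurable A μ := hGF.prod_swap.integral_prod_right'
      have hA01 : ∀ y ∈ Set.Icc (0:ℝ) 1, 0 ≤ A y ∧ A y ≤ 1 := by
        intro y hy
        refine ⟨setIntegral_nonneg hI fun x hx =>
          mul_nonneg (sq_nonneg _) (hrange x hx y hy).1, ?_⟩
        have hb : ‖∫ x in Set.Icc (0:ℝ) 1, (g t x)^2 * f x y‖
            ≤ 1 * (volume (Set.Icc (0:ℝ) 1)).toReal := by
          apply norm_setIntegral_le_of_norm_le_const_ae' hvolI
          filter_upwards with x hx
          have h1 := hgb t x hx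
          have h2 := hrange x hx y hy
          rw [Real.norm_eq_abs, abs_of_nonneg (mul_nonneg (sq_nonneg _) h2.1)]
          nlinarith [h1.1, h1.2, h2.1, h2.2]
        rw [Real.volume_Icc] at hb
        simp only [sub_zero, ENNReal.toReal_ofReal zero_le_one, mul_one] at hb
        exact le_trans (le_abs_self _) hb
      -- a.e. pointwise bound
      have haeb : ∀ᵐ y ∂μ, (g (t+1) y)^2 * w y ≤ A y * (1/4) := by
        filter_upwards [hmem1, hF.prod_left_ae, hF.prod_right_ae] with y hy hint1 hint2
        have hB0 : 0 ≤ ∫ x, f x y ∂μ :=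
          setIntegral_nonneg hI fun x hx => (hrange x hx y hy).1
        have hw0 : 0 ≤ w y := (hw01 y hy).1
        have hw1 : w y ≤ 1 := (hw01 y hy).2
        have hA0 : 0 ≤ A y := (hA01 y hy).1
        have hBw : (∫ x, f x y ∂μ) + w y ≤ 1 := by
          have h1 : (∫ x, f x y ∂μ) + w y = ∫ x, (f x y + f y x) ∂μ :=
            (integral_add hint1 hint2).symm
          rw [h1]
          have h2 : (∫ x, (f x y + f y x) ∂μ) ≤ ∫ _x, (1:ℝ) ∂μ := by
            apply integral_mono_ae (hint1.add hint2) (integrable_const 1)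
            filter_upwards [hmem1] with x hx using hanti x hx y hy
          simpa [integral_const, Measure.real, hμunivToReal] using h2
        have hCS : (g (t+1) y)^2 ≤ A y * ∫ x, f x y ∂μ := by
          have hfy : AEStronglyMeasurable (fun x => f x y) μ := hint1.aestronglyMeasurable
          set u : ℝ → ℝ := fun x => g t x * Real.sqrt (f x y) with hudef
          set v : ℝ → ℝ := fun x => Real.sqrt (f x y) with hvdef
          have hvm : AEStronglyMeasurable v μ :=
            Real.continuous_sqrt.comp_aestronglyMeasurable hfy
          have hum : AEStronglyMeasurable u μ := (hgm t).mul hvm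
          have hsb : ∀ x ∈ Set.Icc (0:ℝ) 1, 0 ≤ Real.sqrt (f x y)
              ∧ Real.sqrt (f x y) ≤ 1 := by
            intro x hx
            refine ⟨Real.sqrt_nonneg _, ?_⟩
            rw [show (1:ℝ) = Real.sqrt 1 by simp]
            exact Real.sqrt_le_sqrt (hrange x hx y hy).2
          have hu2 : MemLp u (ENNReal.ofReal 2) μ := by
            apply MemLp.of_bound hum 1
            filter_upwards [hmem1] with x hx
            have h1 := hgb t x hx
            have h2 := hsb x hx
            rw [Real.norm_eq_abs, abs_of_nonneg (mul_nonneg h1.1 h2.1)]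
            nlinarith [h1.1, h1.2, h2.1, h2.2]
          have hv2 : MemLp v (ENNReal.ofReal 2) μ := by
            apply MemLp.of_bound hvm 1
            filter_upwards [hmem1] with x hx
            rw [Real.norm_eq_abs, abs_of_nonneg (hsb x hx).1]
            exact (hsb x hx).2
          have hpq : Real.HolderConjugate 2 2 := Real.HolderConjugate.two_two
          have hun : 0 ≤ᵐ[μ] u := by
            filter_upwards [hmem1] with x hx
            exact mul_nonneg (hgb t x hx).1 (Real.sqrt_nonneg _)
          have hvn : 0 ≤ᵐ[μ] v :=
            Filter.Eventually.of_forall fun x => Real.sqrt_nonneg _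
          have key := integral_mul_le_Lp_mul_Lq_of_nonneg hpq hun hvn hu2 hv2
          have huv : (∫ x, u x * v x ∂μ) = g (t+1) y := by
            rw [hgs]
            refine integral_congr_ae ?_
            filter_upwards [hmem1] with x hx
            have hfx0 : 0 ≤ f x y := (hrange x hx y hy).1
            simp only [hudef, hvdef, mul_assoc, Real.mul_self_sqrt hfx0]
          have hu2int : (∫ x, u x ^ (2:ℝ) ∂μ) = A y := by
            refine integral_congr_ae ?_
            filter_upwards [hmem1] with x hx
            have hfx0 : 0 ≤ f x y := (hrange x hx y hy).1
            rw [show ((2:ℝ)) = ((2:ℕ):ℝ) by norm_num, Real.rpow_natCast]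
            simp only [hudef, mul_pow, Real.sq_sqrt hfx0]
          have hv2int : (∫ x, v x ^ (2:ℝ) ∂μ) = ∫ x, f x y ∂μ := by
            refine integral_congr_ae ?_
            filter_upwards [hmem1] with x hx
            have hfx0 : 0 ≤ f x y := (hrange x hx y hy).1
            rw [show ((2:ℝ)) = ((2:ℕ):ℝ) by norm_num, Real.rpow_natCast]
            simp only [hvdef, Real.sq_sqrt hfx0]
          rw [huv, hu2int, hv2int] at key
          have hgp : 0 ≤ g (t+1) y := (hgb (t+1) y hy).1
          have hsq := pow_le_pow_left₀ hgp key 2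
          calc (g (t+1) y)^2
              ≤ (A y ^ ((1:ℝ)/2) * (∫ x, f x y ∂μ) ^ ((1:ℝ)/2))^2 := hsq
            _ = A y * ∫ x, f x y ∂μ := by
                rw [mul_pow, ← Real.rpow_natCast (A y ^ ((1:ℝ)/2)) 2,
                  ← Real.rpow_natCast ((∫ x, f x y ∂μ) ^ ((1:ℝ)/2)) 2,
                  ← Real.rpow_mul hA0, ← Real.rpow_mul hB0]
                norm_num
        have e1 : (g (t+1) y)^2 * w y ≤ (A y * ∫ x, f x y ∂μ) * w y :=
          mul_le_mul_of_nonneg_right hCS hw0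
        have e2 : (∫ x, f x y ∂μ) * w y ≤ (1 - w y) * w y :=
          mul_le_mul_of_nonneg_right (by linarith) hw0
        have e3 : (1 - w y) * w y ≤ 1/4 := by nlinarith [sq_nonneg (1 - 2 * w y)]
        calc (g (t+1) y)^2 * w y ≤ (A y * ∫ x, f x y ∂μ) * w y := e1
          _ = A y * ((∫ x, f x y ∂μ) * w y) := mul_assoc _ _ _
          _ ≤ A y * (1/4) := mul_le_mul_of_nonneg_left (e2.trans e3) hA0
      -- integrabilities for monotonicity
      have hg2w_int : Integrable (fun y => (g (t+1) y)^2 * w y) μ := by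
        apply hbd1 _ (((continuous_pow 2).comp_aestronglyMeasurable (hgm (t+1))).mul hwm)
        intro y hy
        have h1 := hgb (t+1) y hy
        have h2 := hw01 y hy
        simp only [Pi.mul_apply]
        rw [abs_of_nonneg (mul_nonneg (sq_nonneg _) h2.1)]
        nlinarith [h1.1, h1.2, h2.1, h2.2]
      have hA_int : Integrable A μ := by
        apply hbd1 _ hAm
        intro y hy
        rw [abs_of_nonneg (hA01 y hy).1]
        exact (hA01 y hy).2
      -- Fubini swap for ∫ A
      have hΦint : Integrable (fun p : ℝ × ℝ => (g t p.2)^2 * f p.2 p.1) (μ.prod μ) := by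
        apply hbd2 _ (hGm.comp_snd.mul hF.aestronglyMeasurable.prod_swap)
        intro p hp1 hp2
        have h1 := hgb t p.2 hp2
        have h2 := hrange p.2 hp2 p.1 hp1
        simp only [Pi.mul_apply, Prod.fst_swap, Prod.snd_swap]
        rw [abs_of_nonneg (mul_nonneg (sq_nonneg _) h2.1)]
        nlinarith [h1.1, h1.2, h2.1, h2.2]
      have hswapA : (∫ y, A y ∂μ) = ∫ y, ∫ z, (g t y)^2 * f y z ∂μ ∂μ :=
        integral_integral_swap (f := fun x' y' => (g t y')^2 * f y' x') hΦint
      calc (∫ y, ∫ z, (g (t+1) y)^2 * f y z ∂μ ∂μ)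
          = ∫ y, (g (t+1) y)^2 * w y ∂μ := hinner (t+1)
        _ ≤ ∫ y, A y * (1/4) ∂μ := integral_mono_ae hg2w_int (hA_int.mul_const _) haeb
        _ = (1/4) * ∫ y, A y ∂μ := by rw [integral_mul_const]; ring
        _ = (1/4) * ∫ y, ∫ z, (g t y)^2 * f y z ∂μ ∂μ := by rw [hswapA]
        _ ≤ (1/4) * (1/2:ℝ)^(2*t+1) := by linarith [ih]
        _ = (1/2:ℝ)^(2*(t+1)+1) := by ring
  obtain ⟨t, rfl⟩ : ∃ t, k = t + 1 := ⟨k - 1, (Nat.succ_pred_eq_of_pos hk).symm⟩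
  have hmt := main t
  have he : 2*(t+1) - 1 = 2*t+1 := by omega
  simpa [Nat.add_sub_cancel, he] using hmt
end

section
/- The expected number of directed Hamilton paths in a uniformly random tournament on n vertices is n!/2^{n−1}; consequently, there exists an n-vertex tournament with at least n!/2^{n−1} directed Hamilton paths. -/
/-- A tournament encoded as a `Bool`-valued relation on `Fin n`. -/
def IsTournament {n : ℕ} (r : Fin n → Fin n → Bool) : Prop :=
  (∀ u, r u u = false) ∧ ∀ u v : Fin n, u ≠ v → (r u v = !r v u)

instance {n : ℕ} : DecidablePred (IsTournament (n := n)) := fun _ =>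
  instDecidableAnd

/-- The number of directed Hamilton paths of a tournament on `Fin n`. -/
noncomputable def hamPathCount {n : ℕ} (r : Fin n → Fin n → Bool) : ℕ :=
  Nat.card {l : List (Fin n) // l.Nodup ∧ l.length = n ∧
    l.Chain' (fun u v => r u v = true)}

namespace SzeleAux

open Finset

variable {n : ℕ}

abbrev Pairs (n : ℕ) := {p : Fin n × Fin n // p.1 < p.2}

def pairsEquiv (n : ℕ) : Pairs n ≃ Σ j : Fin n, Fin j.1 where
  toFun p := ⟨p.1.2, ⟨p.1.1, p.2⟩⟩
  invFun x := ⟨(⟨x.2.1, x.2.2.trans x.1.2⟩, x.1), x.2.2⟩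
  left_inv p := rfl
  right_inv x := rfl

lemma card_pairs : Fintype.card (Pairs n) = n.choose 2 := by
  rw [Fintype.card_congr (pairsEquiv n), Fintype.card_sigma]
  simp only [Fintype.card_fin]
  rw [Fin.sum_univ_eq_sum_range (fun i => i) n, Finset.sum_range_id, Nat.choose_two_right]

def toR (f : Pairs n → Bool) : Fin n → Fin n → Bool :=
  fun u v => if h : u < v then f ⟨(u, v), h⟩ else if h' : v < u then !f ⟨(v, u), h'⟩ else false

lemma isTournament_toR (f : Pairs n → Bool) : IsTournament (toR f) := by
  constructor
  · intro u; simp [toR]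
  · intro u v huv
    rcases huv.lt_or_gt with h | h
    · simp [toR, h, asymm h]
    · simp [toR, h, asymm h]

def tourEquiv (n : ℕ) : {r : Fin n → Fin n → Bool // IsTournament r} ≃ (Pairs n → Bool) where
  toFun r p := r.1 p.1.1 p.1.2
  invFun f := ⟨toR f, isTournament_toR f⟩
  left_inv r := by
    apply Subtype.ext
    funext u v
    rcases lt_trichotomy u v with h | h | h
    · simp [toR, h]
    · subst h; simp [toR, r.2.1 u]
    · have hne := r.2.2 u v (ne_of_gt h)
      simp [toR, h, asymm h, hne]
  right_inv f := by
    funext p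
    obtain ⟨⟨u, v⟩, h⟩ := p
    simp [toR, h]


lemma card_pinned {α : Type*} [Fintype α] {k : ℕ} (ι : Fin k → α)
    (hι : Function.Injective ι) (b : Fin k → Bool) :
    Nat.card {f : α → Bool // ∀ i, f (ι i) = b i} = 2 ^ (Fintype.card α - k) := by
  classical
  have e : {f : α → Bool // ∀ i, f (ι i) = b i} ≃ ({a // a ∉ Set.range ι} → Bool) :=
    { toFun := fun f a => f.1 a.1
      invFun := fun g =>
        ⟨fun a => if h : a ∈ Set.range ι then b ((Equiv.ofInjective ι hι).symm ⟨a, h⟩)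
          else g ⟨a, h⟩, by
          intro i
          have hm : ι i ∈ Set.range ι := Set.mem_range_self i
          simp only []
          rw [dif_pos hm]
          congr 1
          apply hι
          exact Equiv.apply_ofInjective_symm hι ⟨ι i, hm⟩⟩
      left_inv := fun f => by
        apply Subtype.ext
        funext a
        by_cases h : a ∈ Set.range ι
        · simp only [dif_pos h]
          rw [← f.2]
          exact congrArg f.1 (Equiv.apply_ofInjective_symm hι ⟨a, h⟩)
        · simp only [dif_neg h]
      right_inv := fun g => by
        funext a
        simp only [dif_neg a.2] }
  rw [Nat.card_congr e, Nat.card_eq_fintype_card, Fintype.card_fun, Fintype.card_bool]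
  congr 1
  rw [Fintype.card_subtype_compl]
  have h1 : Fintype.card {x // x ∈ Set.range ι} = k := by
    conv_rhs => rw [← Fintype.card_fin k]
    exact (Fintype.card_congr (Equiv.ofInjective ι hι)).symm
  omega

variable {n : ℕ}

def vA (σ : Equiv.Perm (Fin n)) (i : Fin (n - 1)) : Fin n := σ ⟨i.1, by omega⟩

def vB (σ : Equiv.Perm (Fin n)) (i : Fin (n - 1)) : Fin n := σ ⟨i.1 + 1, by omega⟩

lemma vA_ne_vB (σ : Equiv.Perm (Fin n)) (i : Fin (n - 1)) : vA σ i ≠ vB σ i := by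
  intro h
  have := σ.injective h
  rw [Fin.mk.injEq] at this
  omega

/-- The ordered version of the `i`-th edge of the path given by `σ`. -/
def pth (σ : Equiv.Perm (Fin n)) (i : Fin (n - 1)) : Pairs n :=
  if h : vA σ i < vB σ i then ⟨(vA σ i, vB σ i), h⟩
  else ⟨(vB σ i, vA σ i), ((vA_ne_vB σ i).lt_or_gt).resolve_left h⟩

def bval (σ : Equiv.Perm (Fin n)) (i : Fin (n - 1)) : Bool := decide (vA σ i < vB σ i)

lemma pth_injective (σ : Equiv.Perm (Fin n)) : Function.Injective (pth σ) := by
  intro i j hij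
  unfold pth at hij
  have inj : ∀ (a b : ℕ) (ha : a < n) (hb : b < n),
      σ ⟨a, ha⟩ = σ ⟨b, hb⟩ → a = b := by
    intro a b ha hb h
    have := σ.injective h
    rwa [Fin.mk.injEq] at this
  split_ifs at hij with h1 h2 h2 <;>
    rw [Subtype.mk.injEq, Prod.mk.injEq] at hij <;>
    obtain ⟨e1, e2⟩ := hij
  · have := inj _ _ _ _ e1; exact Fin.ext (by omega)
  · have t1 := inj _ _ _ _ e1
    have t2 := inj _ _ _ _ e2
    exact Fin.ext (by omega)
  · have t1 := inj _ _ _ _ e1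
    have t2 := inj _ _ _ _ e2
    exact Fin.ext (by omega)
  · have := inj _ _ _ _ e1; exact Fin.ext (by omega)

/-- The chain condition. -/
def C (σ : Equiv.Perm (Fin n)) (r : Fin n → Fin n → Bool) : Prop :=
  ∀ i : Fin (n - 1), r (vA σ i) (vB σ i) = true

lemma bridge (σ : Equiv.Perm (Fin n)) (r : Fin n → Fin n → Bool) (hr : IsTournament r)
    (i : Fin (n - 1)) :
    r (vA σ i) (vB σ i) = true ↔ r (pth σ i).1.1 (pth σ i).1.2 = bval σ i := by
  unfold pth bval
  split_ifs with h
  · simp [h]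
  · have hlt := ((vA_ne_vB σ i).lt_or_gt).resolve_left h
    have := hr.2 (vA σ i) (vB σ i) (vA_ne_vB σ i)
    simp only [this, h, decide_eq_false_iff_not, not_lt]
    simp [Bool.not_eq_true']

lemma count_tour (σ : Equiv.Perm (Fin n)) :
    Nat.card {r : Fin n → Fin n → Bool // IsTournament r ∧ C σ r} =
      2 ^ (n.choose 2 - (n - 1)) := by
  have e1 : {r : Fin n → Fin n → Bool // IsTournament r ∧ C σ r} ≃
      {f : Pairs n → Bool // ∀ i, f (pth σ i) = bval σ i} :=
    ((Equiv.subtypeSubtypeEquivSubtypeInter _ _).symm).trans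
      ((tourEquiv n).subtypeEquiv (fun r => by
        constructor
        · intro h i
          exact ((bridge σ r.1 r.2 i).mp (h i))
        · intro h i
          exact ((bridge σ r.1 r.2 i).mpr (h i))))
  rw [Nat.card_congr e1, card_pinned (pth σ) (pth_injective σ) (bval σ), card_pairs]

noncomputable def permOf (l : List (Fin n)) (hnd : l.Nodup) (hlen : l.length = n) : Equiv.Perm (Fin n) :=
  Equiv.ofBijective (fun i => l.get (Fin.cast hlen.symm i))
    (Finite.injective_iff_bijective.mp
      ((List.nodup_iff_injective_get.mp hnd).comp (Fin.cast_injective _)))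

noncomputable def listPermEquiv (r : Fin n → Fin n → Bool) :
    {l : List (Fin n) // l.Nodup ∧ l.length = n ∧ l.Chain' (fun u v => r u v = true)} ≃
      {σ : Equiv.Perm (Fin n) // C σ r} where
  toFun x := ⟨permOf x.1 x.2.1 x.2.2.1, by
    intro i
    have := List.isChain_iff_getElem.mp x.2.2.2 i.1 (by have := x.2.2.1; have := i.2; omega)
    exact this⟩
  invFun x := ⟨List.ofFn x.1, List.nodup_ofFn.mpr x.1.injective, List.length_ofFn (f := x.1), by
    refine List.isChain_ofFn.mpr ?_
    intro i hi
    exact x.2 ⟨i, by omega⟩⟩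
  left_inv x := by
    apply Subtype.ext
    apply List.ext_get (by simp [x.2.2.1])
    intro i h1 h2
    simp only [List.get_ofFn]
    show x.1.get _ = x.1.get _
    congr 1
  right_inv x := by
    apply Subtype.ext
    apply Equiv.ext
    intro i
    show (List.ofFn x.1).get _ = x.1 i
    rw [List.get_ofFn]
    congr 1

lemma hamPathCount_eq (r : Fin n → Fin n → Bool) :
    hamPathCount r = Nat.card {σ : Equiv.Perm (Fin n) // C σ r} :=
  Nat.card_congr (listPermEquiv r)

lemma total (n : ℕ) :
    ∑ r ∈ Finset.univ.filter (IsTournament (n := n)), hamPathCount r =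
      n.factorial * 2 ^ (n.choose 2 - (n - 1)) := by
  classical
  have hcount : ∀ r : Fin n → Fin n → Bool,
      hamPathCount r = ∑ σ : Equiv.Perm (Fin n), if C σ r then 1 else 0 := by
    intro r
    rw [hamPathCount_eq, Nat.card_eq_fintype_card, Fintype.card_subtype, Finset.card_filter]
  calc ∑ r ∈ Finset.univ.filter (IsTournament (n := n)), hamPathCount r
      = ∑ r ∈ Finset.univ.filter (IsTournament (n := n)),
          ∑ σ : Equiv.Perm (Fin n), if C σ r then 1 else 0 := by
        exact Finset.sum_congr rfl (fun r _ => hcount r)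
    _ = ∑ σ : Equiv.Perm (Fin n),
          ∑ r ∈ Finset.univ.filter (IsTournament (n := n)), if C σ r then 1 else 0 :=
        Finset.sum_comm
    _ = ∑ σ : Equiv.Perm (Fin n), 2 ^ (n.choose 2 - (n - 1)) := by
        refine Finset.sum_congr rfl (fun σ _ => ?_)
        rw [← Finset.card_filter, Finset.filter_filter]
        have : Fintype.card {r : Fin n → Fin n → Bool // IsTournament r ∧ C σ r} =
            (Finset.univ.filter (fun r => IsTournament r ∧ C σ r)).card :=
          Fintype.card_subtype _
        rw [← this, ← Nat.card_eq_fintype_card, count_tour σ]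
    _ = n.factorial * 2 ^ (n.choose 2 - (n - 1)) := by
        rw [Finset.sum_const, Finset.card_univ, Fintype.card_perm, Fintype.card_fin,
          smul_eq_mul]

end SzeleAux

theorem szele (n : ℕ) (hn : 1 ≤ n) :
    ((∑ r ∈ Finset.univ.filter (IsTournament (n := n)),
        (hamPathCount r : ℝ)) / 2 ^ (n.choose 2) = (n.factorial : ℝ) / 2 ^ (n - 1)) ∧
      ∃ r : Fin n → Fin n → Bool, IsTournament r ∧
        (n.factorial : ℝ) / 2 ^ (n - 1) ≤ hamPathCount r := by
  have hle : n - 1 ≤ n.choose 2 := by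
    cases n with
    | zero => simp
    | succ m =>
        have h : (m + 1).choose 2 = m.choose 1 + m.choose 2 := Nat.choose_succ_succ m 1
        have h1 : m.choose 1 = m := Nat.choose_one_right m
        omega
  have h2 : (2 : ℝ) ^ (n.choose 2 - (n - 1)) * 2 ^ (n - 1) = 2 ^ n.choose 2 := by
    rw [← pow_add, Nat.sub_add_cancel hle]
  have hsum : (∑ r ∈ Finset.univ.filter (IsTournament (n := n)), (hamPathCount r : ℝ)) =
      (n.factorial : ℝ) * 2 ^ (n.choose 2 - (n - 1)) := by
    rw [← Nat.cast_sum, SzeleAux.total n]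
    push_cast
    ring
  constructor
  · rw [hsum, div_eq_div_iff (by positivity) (by positivity), mul_assoc, h2]
  · have hne : (Finset.univ.filter (IsTournament (n := n))).Nonempty := by
      refine ⟨fun u v => decide (u < v), Finset.mem_filter.mpr ⟨Finset.mem_univ _, ?_, ?_⟩⟩
      · intro u; simp
      · intro u v huv
        rcases huv.lt_or_gt with h | h <;> simp [h, asymm h]
    have hcard : (Finset.univ.filter (IsTournament (n := n))).card = 2 ^ n.choose 2 := by
      rw [← Fintype.card_subtype, Fintype.card_congr (SzeleAux.tourEquiv n),
        Fintype.card_fun, Fintype.card_bool, SzeleAux.card_pairs]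
    have havg : ∑ _r ∈ Finset.univ.filter (IsTournament (n := n)),
        ((n.factorial : ℝ) / 2 ^ (n - 1)) ≤
        ∑ r ∈ Finset.univ.filter (IsTournament (n := n)), (hamPathCount r : ℝ) := by
      rw [Finset.sum_const, hcard, hsum, nsmul_eq_mul]
      apply le_of_eq
      push_cast
      have h3 : (2 : ℝ) ^ (n.choose 2 - (n - 1)) = 2 ^ n.choose 2 / 2 ^ (n - 1) := by
        rw [eq_div_iff (by positivity), h2]
      rw [h3]
      ring
    obtain ⟨r, hrT, hr⟩ := Finset.exists_le_of_sum_le hne havg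
    exact ⟨r, (Finset.mem_filter.mp hrT).2, hr⟩
end
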